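/- Fix D > 0 and θ ∈ (−π/2, π/2). Then ξ(r, θ, D) tends to sin²θ as r → +∞; that is, the geometry loss factor converges to the far-field geometry loss sin²θ in the limit of infinite distance. -/

import Mathlib

open Real Filter Topology

/-- The geometry loss factor
`ξ(r, θ, D) = 1 - (r cosθ/D)(π·𝟙[2r<D] + arctan(D r cosθ/(r² - D²/4)))`. -/
noncomputable def geomLoss (r θ D : ℝ) : ℝ :=
  1 - (r * Real.cos θ / D) *
      (Real.pi * (if 2 * r < D then (1 : ℝ) else 0)
        + Real.arctan (D * r * Real.cos θ / (r ^ 2 - D ^ 2 / 4)))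

/-- In the far-field limit `r → +∞`, the geometry loss factor `ξ(r, θ, D)` tends
to the far-field geometry loss `sin²θ`. -/
theorem geomLoss_tendsto_farField
    (D θ : ℝ) (hD : 0 < D) (hθ : θ ∈ Set.Ioo (-(Real.pi / 2)) (Real.pi / 2)) :
    Tendsto (fun r : ℝ => geomLoss r θ D) atTop (𝓝 (Real.sin θ ^ 2)) := by
  have hc : 0 < Real.cos θ := Real.cos_pos_of_mem_Ioo hθ
  set c := Real.cos θ with hcdef
  -- g r = 1 - D^2/(4 r^2) → 1
  have hg : Tendsto (fun r : ℝ => 1 - D ^ 2 / (4 * r ^ 2)) atTop (𝓝 1) := by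
    have : Tendsto (fun r : ℝ => D ^ 2 / (4 * r ^ 2)) atTop (𝓝 0) := by
      apply Tendsto.div_atTop tendsto_const_nhds
      exact (tendsto_pow_atTop (by norm_num)).const_mul_atTop (by norm_num)
    simpa using tendsto_const_nhds.sub this
  -- u r → 0
  have hu0 : Tendsto (fun r : ℝ => D * r * c / (r ^ 2 - D ^ 2 / 4)) atTop (𝓝 0) := by
    have h1 : Tendsto (fun r : ℝ => (D * c / r) / (1 - D ^ 2 / (4 * r ^ 2))) atTop (𝓝 0) := by
      have : Tendsto (fun r : ℝ => D * c / r) atTop (𝓝 0) :=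
        Tendsto.div_atTop tendsto_const_nhds tendsto_id
      have h := this.div hg one_ne_zero
      rw [zero_div] at h
      exact h
    refine h1.congr' ?_
    filter_upwards [eventually_gt_atTop (max 0 (D / 2))] with r hr
    have hr0 : 0 < r := lt_of_le_of_lt (le_max_left _ _) hr
    have hrD : D / 2 < r := lt_of_le_of_lt (le_max_right _ _) hr
    have hden : 0 < r ^ 2 - D ^ 2 / 4 := by nlinarith
    have hg' : (1:ℝ) - D ^ 2 / (4 * r ^ 2) = (r ^ 2 - D ^ 2 / 4) / r ^ 2 := by
      field_simp
    rw [hg', div_div_eq_mul_div]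
    rw [div_eq_div_iff hden.ne' hden.ne']
    field_simp
  have hune : ∀ᶠ r in atTop, D * r * c / (r ^ 2 - D ^ 2 / 4) ≠ 0 := by
    filter_upwards [eventually_gt_atTop (max 0 (D / 2))] with r hr
    have hr0 : 0 < r := lt_of_le_of_lt (le_max_left _ _) hr
    have hrD : D / 2 < r := lt_of_le_of_lt (le_max_right _ _) hr
    have hden : 0 < r ^ 2 - D ^ 2 / 4 := by nlinarith
    positivity
  have hu : Tendsto (fun r : ℝ => D * r * c / (r ^ 2 - D ^ 2 / 4)) atTop (𝓝[≠] 0) :=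
    tendsto_nhdsWithin_iff.mpr ⟨hu0, hune⟩
  -- arctan x / x → 1 near 0
  have harc : Tendsto (fun x : ℝ => Real.arctan x / x) (𝓝[≠] (0:ℝ)) (𝓝 1) := by
    have h := (Real.hasDerivAt_arctan 0)
    rw [hasDerivAt_iff_tendsto_slope] at h
    have : (fun x : ℝ => Real.arctan x / x) = slope Real.arctan 0 := by
      funext x
      simp [slope, Real.arctan_zero, div_eq_inv_mul]
    rw [this]
    simpa using h
  have hA : Tendsto (fun r : ℝ =>
      Real.arctan (D * r * c / (r ^ 2 - D ^ 2 / 4)) / (D * r * c / (r ^ 2 - D ^ 2 / 4)))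
      atTop (𝓝 1) := harc.comp hu
  have hB : Tendsto (fun r : ℝ => c ^ 2 / (1 - D ^ 2 / (4 * r ^ 2))) atTop (𝓝 (c ^ 2)) := by
    have h := (tendsto_const_nhds : Tendsto (fun _ : ℝ => c ^ 2) atTop (𝓝 (c ^ 2))).div hg one_ne_zero
    rw [div_one] at h
    exact h
  have hmain : Tendsto (fun r : ℝ =>
      1 - (Real.arctan (D * r * c / (r ^ 2 - D ^ 2 / 4)) / (D * r * c / (r ^ 2 - D ^ 2 / 4)))
        * (c ^ 2 / (1 - D ^ 2 / (4 * r ^ 2)))) atTop (𝓝 (1 - 1 * c ^ 2)) :=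
    tendsto_const_nhds.sub (hA.mul hB)
  have hfin : (1 : ℝ) - 1 * c ^ 2 = Real.sin θ ^ 2 := by
    have := Real.sin_sq_add_cos_sq θ
    rw [hcdef]; nlinarith
  rw [← hfin]
  refine hmain.congr' ?_
  filter_upwards [eventually_gt_atTop (max 0 (D / 2))] with r hr
  have hr0 : 0 < r := lt_of_le_of_lt (le_max_left _ _) hr
  have hrD : D / 2 < r := lt_of_le_of_lt (le_max_right _ _) hr
  have hden : 0 < r ^ 2 - D ^ 2 / 4 := by nlinarith
  have hu' : D * r * c / (r ^ 2 - D ^ 2 / 4) ≠ 0 := by positivity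
  have hg' : (1 : ℝ) - D ^ 2 / (4 * r ^ 2) ≠ 0 := by
    have : 0 < r ^ 2 := by positivity
    intro h
    have : D ^ 2 / (4 * r ^ 2) = 1 := by linarith
    rw [div_eq_one_iff_eq (by positivity)] at this
    nlinarith
  have hif : ¬ (2 * r < D) := by linarith
  have hg2 : (1:ℝ) - D ^ 2 / (4 * r ^ 2) = (r ^ 2 - D ^ 2 / 4) / r ^ 2 := by
    field_simp
  simp only [geomLoss, if_neg hif, mul_zero, zero_add, ← hcdef, hg2]
  rw [div_div_eq_mul_div, div_div_eq_mul_div]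
  generalize Real.arctan (D * r * c / (r ^ 2 - D ^ 2 / 4)) = a
  have h1 : (D * r * c) * (r ^ 2 - D ^ 2 / 4) ≠ 0 := by positivity
  rw [sub_right_inj, div_mul_div_comm, mul_comm (r * c / D) a, ← mul_div_assoc,
    div_eq_div_iff h1 hD.ne']
  ring
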